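/- Let μ₁, …, μ_L ≥ 0 with ∑ᵢ μᵢ = 1 and ∑_{k=j}^L μ_k > 0 for each j. Let A⁽¹⁾₁, …, A⁽¹⁾_L be symmetric p×p matrices satisfying ∑ᵢ μᵢ A⁽¹⁾ᵢ = 0 and the monotonicity A⁽¹⁾₁ ⪰ A⁽¹⁾₂ ⪰ … ⪰ A⁽¹⁾_L. Define recursively A⁽ʲ⁺¹⁾ᵢ = A⁽ʲ⁾ᵢ + (μ_j / ∑_{k=j+1}^L μ_k)·A⁽ʲ⁾_j for i > j. Then A⁽ʲ⁾_j ⪰ 0 for every j. -/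

import Mathlib

open Matrix Finset

lemma psd_smul {p : ℕ} {c : ℝ} (hc : 0 ≤ c) {M : Matrix (Fin p) (Fin p) ℝ}
    (hM : M.PosSemidef) : (c • M).PosSemidef := by
  rw [posSemidef_iff_dotProduct_mulVec]
  constructor
  · unfold Matrix.IsHermitian
    rw [conjTranspose_smul, hM.1]
    simp
  · intro x
    have := hM.dotProduct_mulVec_nonneg x
    simp only [Matrix.smul_mulVec, dotProduct_smul, smul_eq_mul]
    exact mul_nonneg hc this

lemma psd_sum {p : ℕ} (s : Finset ℕ) (f : ℕ → Matrix (Fin p) (Fin p) ℝ)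
    (h : ∀ i ∈ s, (f i).PosSemidef) : (∑ i ∈ s, f i).PosSemidef := by
  induction s using Finset.induction with
  | empty => simpa using Matrix.PosSemidef.zero
  | insert _ _ hx ih =>
    rw [Finset.sum_insert hx]
    exact (h _ (Finset.mem_insert_self _ _)).add
      (ih fun i hi => h i (Finset.mem_insert_of_mem hi))

theorem stmt10 (p L : ℕ) (hL : 1 ≤ L) (μ : ℕ → ℝ)
    (hμ : ∀ i, 0 ≤ μ i) (hsum : ∑ i ∈ Finset.Icc 1 L, μ i = 1)
    (htail : ∀ j, 1 ≤ j → j ≤ L → 0 < ∑ k ∈ Finset.Icc j L, μ k)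
    (A : ℕ → ℕ → Matrix (Fin p) (Fin p) ℝ)
    (hAsymm : ∀ j i, (A j i).IsSymm)
    (hbase : ∑ i ∈ Finset.Icc 1 L, μ i • A 1 i = 0)
    (hmono : ∀ i, 1 ≤ i → i < L → (A 1 i - A 1 (i + 1)).PosSemidef)
    (hrec : ∀ j i, 1 ≤ j → j ≤ L - 1 → j + 1 ≤ i → i ≤ L →
      A (j + 1) i = A j i + (μ j / ∑ k ∈ Finset.Icc (j + 1) L, μ k) • A j j) :
    ∀ j, 1 ≤ j → j ≤ L → (A j j).PosSemidef := by
  have key : ∀ j, 1 ≤ j → j ≤ L →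
      (∑ i ∈ Finset.Icc j L, μ i • A j i = 0) ∧
      (∀ i, j ≤ i → i < L → (A j i - A j (i + 1)).PosSemidef) := by
    intro j hj
    induction j, hj using Nat.le_induction with
    | base => intro _; exact ⟨hbase, fun i hi hiL => hmono i hi hiL⟩
    | succ j hj ih =>
      intro hjL
      have hjL' : j ≤ L - 1 := Nat.le_sub_one_of_lt hjL
      have hjL'' : j ≤ L := le_of_lt hjL
      obtain ⟨hsum0, hmono0⟩ := ih hjL''
      set c : ℝ := μ j / ∑ k ∈ Finset.Icc (j + 1) L, μ k with hc
      have hS : 0 < ∑ k ∈ Finset.Icc (j + 1) L, μ k := htail (j + 1) (by omega) hjL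
      constructor
      · have h1 : ∑ i ∈ Finset.Icc (j + 1) L, μ i • A (j + 1) i
            = ∑ i ∈ Finset.Icc (j + 1) L, (μ i • A j i + (μ i * c) • A j j) := by
          apply Finset.sum_congr rfl
          intro i hi
          rw [Finset.mem_Icc] at hi
          rw [hrec j i hj hjL' hi.1 hi.2, smul_add, smul_smul]
        rw [h1, Finset.sum_add_distrib, ← Finset.sum_smul]
        have h2 : (∑ i ∈ Finset.Icc (j + 1) L, μ i * c) = μ j := by
          rw [← Finset.sum_mul, hc]
          field_simp
        rw [h2]
        have h3 : Finset.Icc j L = insert j (Finset.Icc (j + 1) L) := by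
          ext x; simp only [Finset.mem_Icc, Finset.mem_insert]; omega
        rw [h3, Finset.sum_insert (by simp)] at hsum0
        rw [add_comm]
        exact hsum0
      · intro i hi hiL
        have e1 := hrec j i hj hjL' (by omega) (le_of_lt hiL)
        have e2 := hrec j (i + 1) hj hjL' (by omega) hiL
        rw [e1, e2]
        have h4 : A j i + c • A j j - (A j (i + 1) + c • A j j)
            = A j i - A j (i + 1) := by abel
        rw [h4]
        exact hmono0 i (by omega) hiL
  intro j hj hjL
  obtain ⟨hsum0, hmono0⟩ := key j hj hjL
  have hS : 0 < ∑ k ∈ Finset.Icc j L, μ k := htail j hj hjL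
  have tele : ∀ i, j ≤ i → i ≤ L → (A j j - A j i).PosSemidef := by
    intro i hi
    induction i, hi using Nat.le_induction with
    | base => intro _; simpa using Matrix.PosSemidef.zero
    | succ i hi ih =>
      intro hiL
      have h5 : A j j - A j (i + 1) = (A j j - A j i) + (A j i - A j (i + 1)) := by abel
      rw [h5]
      exact (ih (by omega)).add (hmono0 i hi (by omega))
  have hbig : ((∑ k ∈ Finset.Icc j L, μ k) • A j j).PosSemidef := by
    have h6 : (∑ k ∈ Finset.Icc j L, μ k) • A j j
        = ∑ i ∈ Finset.Icc j L, μ i • (A j j - A j i) := by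
      simp only [smul_sub, Finset.sum_sub_distrib, hsum0, sub_zero, Finset.sum_smul]
    rw [h6]
    exact psd_sum _ _ fun i hi => by
      rw [Finset.mem_Icc] at hi
      exact psd_smul (hμ i) (tele i hi.1 hi.2)
  have h7 : A j j = (∑ k ∈ Finset.Icc j L, μ k)⁻¹ • ((∑ k ∈ Finset.Icc j L, μ k) • A j j) := by
    rw [smul_smul, inv_mul_cancel₀ (ne_of_gt hS), one_smul]
  rw [h7]
  exact psd_smul (inv_nonneg.mpr (le_of_lt hS)) hbig
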